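/- Let y solve the ODE y'(t) = f(y(t),t) on [0,T] with y(0) = y₀, let Y : [0,T] → ℝ^d be continuously differentiable with Y(0) = y₀, and set e = y − Y. Let H(t) be the averaged Jacobian satisfying H(t)(y(t) − Y(t)) = f(y(t),t) − f(Y(t),t), and let φ solve the adjoint problem −φ'(t) = H(t)ᵀ φ(t) + ψ(t) on [0,T] with φ(T) = ψ_T. Then ∫₀ᵀ (e(t), ψ(t)) dt + (e(T), ψ_T) = ∫₀ᵀ (f(Y(t),t) − Y'(t), φ(t)) dt. -/

import Mathlib

open Matrix intervalIntegral

lemma hasDerivAt_dot {d : ℕ} {u v : ℝ → Fin d → ℝ} {u' v' : Fin d → ℝ} {t : ℝ}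
    (hu : HasDerivAt u u' t) (hv : HasDerivAt v v' t) :
    HasDerivAt (fun s => u s ⬝ᵥ v s) (u' ⬝ᵥ v t + u t ⬝ᵥ v') t := by
  simp only [dotProduct]
  rw [← Finset.sum_add_distrib]
  exact HasDerivAt.fun_sum fun i _ =>
    ((hasDerivAt_pi.mp hu i).mul (hasDerivAt_pi.mp hv i))

lemma cont_dot {d : ℕ} {u v : ℝ → Fin d → ℝ}
    (hu : Continuous u) (hv : Continuous v) :
    Continuous fun s => u s ⬝ᵥ v s := by
  simp only [dotProduct]
  exact continuous_finset_sum _ fun i _ =>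
    ((continuous_apply i).comp hu).mul ((continuous_apply i).comp hv)

theorem sdc_error_representation
    (d : ℕ) (T : ℝ) (hT : 0 ≤ T)
    (f : (Fin d → ℝ) → ℝ → (Fin d → ℝ))
    (y Y Y' φ ψ : ℝ → Fin d → ℝ) (y₀ ψT : Fin d → ℝ)
    (H : ℝ → Matrix (Fin d) (Fin d) ℝ)
    (hy : ∀ t ∈ Set.Icc 0 T, HasDerivAt y (f (y t) t) t)
    (hy0 : y 0 = y₀)
    (hY : ∀ t ∈ Set.Icc 0 T, HasDerivAt Y (Y' t) t)
    (hY0 : Y 0 = y₀)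
    (hY'c : Continuous Y')
    (hψc : Continuous ψ)
    (hφc : Continuous φ)
    (hyc : Continuous y) (hYc : Continuous Y)
    (hfyc : Continuous fun t => f (y t) t)
    (hfYc : Continuous fun t => f (Y t) t)
    (hHc : Continuous H)
    (hH : ∀ t ∈ Set.Icc 0 T, (H t).mulVec (y t - Y t) = f (y t) t - f (Y t) t)
    (hφ : ∀ t ∈ Set.Icc 0 T,
      HasDerivAt φ (-((H t)ᵀ.mulVec (φ t)) - ψ t) t)
    (hφT : φ T = ψT) :
    (∫ t in (0:ℝ)..T, (y t - Y t) ⬝ᵥ ψ t) + (y T - Y T) ⬝ᵥ ψT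
      = ∫ t in (0:ℝ)..T, (f (Y t) t - Y' t) ⬝ᵥ φ t := by
  set g : ℝ → ℝ := fun t => (y t - Y t) ⬝ᵥ φ t with hg
  have hgderiv : ∀ t ∈ Set.Icc 0 T,
      HasDerivAt g ((f (Y t) t - Y' t) ⬝ᵥ φ t - (y t - Y t) ⬝ᵥ ψ t) t := by
    intro t ht
    have he : HasDerivAt (fun s => y s - Y s) (f (y t) t - Y' t) t :=
      (hy t ht).sub (hY t ht)
    have h1 := hasDerivAt_dot he (hφ t ht)
    convert h1 using 1
    have key : (y t - Y t) ⬝ᵥ ((H t)ᵀ.mulVec (φ t)) = (f (y t) t - f (Y t) t) ⬝ᵥ φ t := by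
      rw [Matrix.mulVec_transpose, dotProduct_comm, ← Matrix.dotProduct_mulVec, hH t ht,
        dotProduct_comm]
    simp only [dotProduct_sub, sub_dotProduct, dotProduct_neg, key]
    ring
  have hcont : Continuous fun t => (f (Y t) t - Y' t) ⬝ᵥ φ t - (y t - Y t) ⬝ᵥ ψ t :=
    (cont_dot (hfYc.sub hY'c) hφc).sub (cont_dot (hyc.sub hYc) hψc)
  have hint : ∫ t in (0:ℝ)..T, ((f (Y t) t - Y' t) ⬝ᵥ φ t - (y t - Y t) ⬝ᵥ ψ t)
      = g T - g 0 := by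
    apply intervalIntegral.integral_eq_sub_of_hasDerivAt
    · intro t ht
      rw [Set.uIcc_of_le hT] at ht
      exact hgderiv t ht
    · exact hcont.intervalIntegrable 0 T
  have hsplit : ∫ t in (0:ℝ)..T, ((f (Y t) t - Y' t) ⬝ᵥ φ t - (y t - Y t) ⬝ᵥ ψ t)
      = (∫ t in (0:ℝ)..T, (f (Y t) t - Y' t) ⬝ᵥ φ t) - ∫ t in (0:ℝ)..T, (y t - Y t) ⬝ᵥ ψ t :=
    intervalIntegral.integral_sub ((cont_dot (hfYc.sub hY'c) hφc).intervalIntegrable 0 T)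
      ((cont_dot (hyc.sub hYc) hψc).intervalIntegrable 0 T)
  have hg0 : g 0 = 0 := by simp [hg, hy0, hY0]
  have hgT : g T = (y T - Y T) ⬝ᵥ ψT := by simp [hg, hφT]
  rw [hsplit, hg0, hgT, sub_zero] at hint
  linarith
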